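/- Let 𝒜 be a symmetric real tensor of even order m and dimension n. Then the function x ↦ 𝒜x^m attains a maximum value μ on the set {x ∈ ℝ^n : ‖x‖_m = 1}; this value μ is an H-eigenvalue of 𝒜, and every H-eigenvalue λ of 𝒜 satisfies λ ≤ μ. Consequently λ_max(𝒜) = max_{x ≠ 0} 𝒜x^m/‖x‖_m^m = max_{‖x‖_m = 1} 𝒜x^m, where λ_max(𝒜) denotes the maximum H-eigenvalue of 𝒜. -/

import Mathlib

open MvPolynomial Finset

noncomputable section

/-- `tmul A x = 𝒜 x^m`, the homogeneous form associated with an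
`m`-th order `n`-dimensional tensor `A`. -/
def tmul {m n : ℕ} (A : (Fin m → Fin n) → ℝ) (x : Fin n → ℝ) : ℝ :=
  ∑ g : Fin m → Fin n, A g * ∏ j, x (g j)

/-- A tensor is symmetric if its entries are invariant under permutations of the indices. -/
def IsSymT {m n : ℕ} (A : (Fin m → Fin n) → ℝ) : Prop :=
  ∀ (σ : Equiv.Perm (Fin m)) (g : Fin m → Fin n), A (g ∘ σ) = A g

/-- `lam` is an H-eigenvalue of a tensor of order `m + 1`:
there is a nonzero `x` with `𝒜 x^m = lam * x^{[m]}`. -/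
def IsHEig {m n : ℕ} (A : (Fin (m + 1) → Fin n) → ℝ) (lam : ℝ) : Prop :=
  ∃ x : Fin n → ℝ, x ≠ 0 ∧ ∀ i : Fin n,
    (∑ g : Fin m → Fin n, A (Fin.cons i g) * ∏ j, x (g j)) = lam * x i ^ m

/-- `𝒜_Γ x_Γ^m` for a subtensor `B` indexed by an index set `Γ ⊆ {1,…,n}`. -/
def subTmul {m n : ℕ} (Γ : Finset (Fin n)) (B : (Fin m → Γ) → ℝ) (x : Fin n → ℝ) : ℝ :=
  ∑ g : Fin m → Γ, B g * ∏ j, x (g j).1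

/-- An index tuple is off-diagonal if not all of its entries coincide. -/
def NotDiag {m : ℕ} {I : Type*} (g : Fin m → I) : Prop := ¬ ∀ j j' : Fin m, g j = g j'

/-- Condition (iii) in the definition of a W-tensor, for one subtensor. -/
def WCondIII {m n : ℕ} {Γ : Finset (Fin n)} (B : (Fin m → Γ) → ℝ) : Prop :=
  (∃ gb : Fin m → Γ, NotDiag gb ∧ ∀ g : Fin m → Γ, NotDiag g →
      (∀ σ : Equiv.Perm (Fin m), g ≠ gb ∘ σ) → B g = 0) ∨
  (∀ g : Fin m → Γ, NotDiag g → 0 ≤ B g)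

/-- Condition (i) in the definition of a W-tensor. -/
def WCondI {n s : ℕ} (Γ : Fin s → Finset (Fin n)) : Prop :=
  ∀ p : Fin s, 0 < (p : ℕ) →
    (((Finset.univ.filter fun l => l < p).biUnion Γ) ∩ Γ p).card ≤ 1

/-- W-tensor. -/
def IsWTensor {m n : ℕ} (A : (Fin m → Fin n) → ℝ) : Prop :=
  ∃ (s : ℕ) (Γ : Fin s → Finset (Fin n)) (B : ∀ l : Fin s, (Fin m → Γ l) → ℝ),
    0 < s ∧ s ≤ n ∧
    Function.Injective Γ ∧
    Finset.univ.biUnion Γ = Finset.univ ∧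
    WCondI Γ ∧
    (∀ x : Fin n → ℝ, tmul A x = ∑ l, subTmul (Γ l) (B l) x) ∧
    (∀ l, WCondIII (B l))

/-- Sums of squares of polynomials. -/
def IsSOSPoly {σ : Type*} (p : MvPolynomial σ ℝ) : Prop :=
  ∃ (r : ℕ) (q : Fin r → MvPolynomial σ ℝ), p = ∑ j, q j ^ 2

/-- The polynomial `𝒜 x^m` as a formal multivariate polynomial. -/
def tpoly {m n : ℕ} (A : (Fin m → Fin n) → ℝ) : MvPolynomial (Fin n) ℝ :=
  ∑ g : Fin m → Fin n, MvPolynomial.C (A g) * ∏ j, MvPolynomial.X (g j)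

/-- The polynomial `𝒜_Γ x_Γ^m` of a subtensor, in the variables `x_Γ`. -/
def subTpoly {m n : ℕ} (Γ : Finset (Fin n)) (B : (Fin m → Γ) → ℝ) : MvPolynomial Γ ℝ :=
  ∑ g : Fin m → Γ, MvPolynomial.C (B g) * ∏ j, MvPolynomial.X (g j)

/-- A (symmetric) tensor is copositive if `𝒜 x^m ≥ 0` for all entrywise-nonnegative `x`. -/
def Copositive {m n : ℕ} (A : (Fin m → Fin n) → ℝ) : Prop :=
  ∀ x : Fin n → ℝ, (∀ i, 0 ≤ x i) → 0 ≤ tmul A x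



section Lemma21Aux

open Finset

variable {m n : ℕ}

/-- The contraction `(𝒜 x^m)_i = ∑_h A(i, h) ∏_j x_{h j}`. -/
def Dvec (A : (Fin (m + 1) → Fin n) → ℝ) (x : Fin n → ℝ) (i : Fin n) : ℝ :=
  ∑ h : Fin m → Fin n, A (Fin.cons i h) * ∏ j, x (h j)

lemma sum_cons_decomp (F : (Fin (m + 1) → Fin n) → ℝ) :
    ∑ g : Fin (m + 1) → Fin n, F g
      = ∑ i : Fin n, ∑ h : Fin m → Fin n, F (Fin.cons i h) := by
  rw [← (Fintype.sum_equiv (Fin.consEquiv fun _ => Fin n)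
    (fun p => F (Fin.cons p.1 p.2)) F (fun p => rfl)), Fintype.sum_prod_type]

lemma contract (A : (Fin (m + 1) → Fin n) → ℝ) (x : Fin n → ℝ) :
    ∑ i, x i * Dvec A x i = tmul A x := by
  rw [tmul, sum_cons_decomp (fun g => A g * ∏ j, x (g j))]
  simp only [Dvec, Finset.mul_sum]
  refine Finset.sum_congr rfl fun i _ => Finset.sum_congr rfl fun h _ => ?_
  rw [Fin.prod_univ_succ]
  simp only [Fin.cons_zero, Fin.cons_succ]
  ring

lemma tmul_smul {M : ℕ} (A : (Fin M → Fin n) → ℝ) (t : ℝ) (x : Fin n → ℝ) :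
    tmul A (t • x) = t ^ M * tmul A x := by
  unfold tmul
  rw [Finset.mul_sum]
  refine Finset.sum_congr rfl fun g _ => ?_
  have : ∏ j : Fin M, (t • x) (g j) = t ^ M * ∏ j, x (g j) := by
    simp only [Pi.smul_apply, smul_eq_mul]
    rw [Finset.prod_mul_distrib, Finset.prod_const, Finset.card_univ, Fintype.card_fin]
  rw [this]; ring

lemma image_succ : (Finset.univ : Finset (Fin m)).image Fin.succ
    = (Finset.univ : Finset (Fin (m + 1))).erase 0 := by
  ext k; simp [Fin.exists_succ_eq]

lemma prod_erase_zero (f : Fin (m + 1) → ℝ) :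
    ∏ j ∈ (Finset.univ.erase 0), f j = ∏ j : Fin m, f j.succ := by
  rw [← image_succ, Finset.prod_image (fun a _ b _ h => Fin.succ_injective _ h)]

/-- The (strict Fréchet) derivative of `tmul A` at `x`. -/
def fder (M : ℕ) (A : (Fin M → Fin n) → ℝ) (x : Fin n → ℝ) : (Fin n → ℝ) →L[ℝ] ℝ :=
  ∑ g : Fin M → Fin n, A g • ∑ j : Fin M,
    (∏ j' ∈ Finset.univ.erase j, x (g j')) • ContinuousLinearMap.proj (g j)

lemma hasStrictFDerivAt_tmul {M : ℕ} (A : (Fin M → Fin n) → ℝ) (x : Fin n → ℝ) :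
    HasStrictFDerivAt (tmul A) (fder M A x) x := by
  unfold tmul fder
  apply HasStrictFDerivAt.fun_sum
  intro g _
  have hp := HasStrictFDerivAt.finset_prod (𝕜 := ℝ) (u := (Finset.univ : Finset (Fin M)))
      (g := fun j (x : Fin n → ℝ) => x (g j))
      (g' := fun j => ContinuousLinearMap.proj (g j)) (x := x)
      (fun j _ => hasStrictFDerivAt_apply (g j) x)
  exact hp.const_mul (A g)

/-- The (strict Fréchet) derivative of `x ↦ ∑ i, x i ^ (m+1)` at `x`. -/
def pder (m : ℕ) (x : Fin n → ℝ) : (Fin n → ℝ) →L[ℝ] ℝ :=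
  ∑ i : Fin n, (((m : ℝ) + 1) * x i ^ m) • ContinuousLinearMap.proj i

lemma hasStrictFDerivAt_phi (x : Fin n → ℝ) :
    HasStrictFDerivAt (fun x : Fin n → ℝ => ∑ i, x i ^ (m + 1)) (pder m x) x := by
  apply HasStrictFDerivAt.fun_sum
  intro i _
  have h := HasStrictDerivAt.comp_hasStrictFDerivAt (𝕜 := ℝ) x
    (hasStrictDerivAt_pow (m + 1) (x i)) (hasStrictFDerivAt_apply i x)
  simpa [Function.comp_def] using h

lemma pder_apply_single (x : Fin n → ℝ) (i : Fin n) :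
    pder m x (Pi.single i 1) = ((m : ℝ) + 1) * x i ^ m := by
  simp [pder, ContinuousLinearMap.sum_apply, Pi.single_apply]

lemma pder_apply_self (x : Fin n → ℝ) :
    pder m x x = ((m : ℝ) + 1) * ∑ i, x i ^ (m + 1) := by
  simp only [pder, ContinuousLinearMap.sum_apply, ContinuousLinearMap.smul_apply,
    ContinuousLinearMap.proj_apply, smul_eq_mul, Finset.mul_sum]
  refine Finset.sum_congr rfl fun i _ => ?_
  ring

set_option maxHeartbeats 1000000 in
lemma fder_apply_single (A : (Fin (m + 1) → Fin n) → ℝ) (hsym : IsSymT A)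
    (x : Fin n → ℝ) (i : Fin n) :
    fder (m + 1) A x (Pi.single i 1) = ((m : ℝ) + 1) * Dvec A x i := by
  classical
  have h1 : fder (m + 1) A x (Pi.single i 1)
      = ∑ j : Fin (m + 1), ∑ g : Fin (m + 1) → Fin n,
          A g * (if g j = i then ∏ j' ∈ Finset.univ.erase j, x (g j') else 0) := by
    have h0 : fder (m + 1) A x (Pi.single i 1)
        = ∑ g : Fin (m + 1) → Fin n, ∑ j : Fin (m + 1),
            A g * (if g j = i then ∏ j' ∈ Finset.univ.erase j, x (g j') else 0) := by
      rw [fder, ContinuousLinearMap.sum_apply]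
      refine Finset.sum_congr rfl fun g _ => ?_
      simp only [ContinuousLinearMap.smul_apply, ContinuousLinearMap.sum_apply,
        ContinuousLinearMap.proj_apply, smul_eq_mul, Pi.single_apply, mul_ite, mul_one,
        mul_zero, Finset.mul_sum]
    rw [h0]
    exact Finset.sum_comm
  set T : Fin (m + 1) → ℝ := fun j => ∑ g : Fin (m + 1) → Fin n,
      A g * (if g j = i then ∏ j' ∈ Finset.univ.erase j, x (g j') else 0) with hT
  have hTj : ∀ j, T j = T 0 := by
    intro j
    by_cases hj : j = 0
    · rw [hj]
    set σ : Equiv.Perm (Fin (m + 1)) := Equiv.swap 0 j with hσ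
    have himg : (Finset.univ.erase j).image σ = Finset.univ.erase 0 := by
      rw [Finset.image_erase (Equiv.injective σ)]
      congr 1
      · ext k
        simp [Equiv.surjective σ |>.exists.symm]
      · exact Equiv.swap_apply_right 0 j
    rw [hT]
    refine Fintype.sum_equiv (Equiv.arrowCongr σ (Equiv.refl (Fin n))) _ _ (fun g => ?_)
    have heg : (Equiv.arrowCongr σ (Equiv.refl (Fin n))) g = g ∘ σ.symm := rfl
    rw [heg, hsym σ.symm g]
    have hc0 : (g ∘ σ.symm) 0 = g j := by
      simp [hσ, Equiv.symm_swap, Equiv.swap_apply_left]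
    rw [hc0]
    have hprod : ∏ j' ∈ Finset.univ.erase 0, x ((g ∘ σ.symm) j')
        = ∏ j' ∈ Finset.univ.erase j, x (g j') := by
      rw [← himg, Finset.prod_image (fun a _ b _ h => σ.injective h)]
      refine Finset.prod_congr rfl fun a _ => ?_
      simp
    rw [hprod]
  have hT0 : T 0 = Dvec A x i := by
    rw [hT]
    show (∑ g : Fin (m + 1) → Fin n,
        A g * if g 0 = i then ∏ j' ∈ Finset.univ.erase 0, x (g j') else 0) = Dvec A x i
    rw [sum_cons_decomp (fun g => A g *
      (if g 0 = i then ∏ j' ∈ Finset.univ.erase 0, x (g j') else 0))]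
    have key : ∀ a : Fin n, ∀ h : Fin m → Fin n,
        A (Fin.cons a h) * (if (Fin.cons a h : Fin (m + 1) → Fin n) 0 = i
          then ∏ j' ∈ Finset.univ.erase 0, x ((Fin.cons a h : Fin (m + 1) → Fin n) j') else 0)
        = if a = i then A (Fin.cons a h) * ∏ j, x (h j) else 0 := by
      intro a h
      rw [prod_erase_zero (fun j' => x ((Fin.cons a h : Fin (m + 1) → Fin n) j'))]
      simp [Fin.cons_zero, Fin.cons_succ, mul_ite, mul_zero]
    simp_rw [key]
    calc ∑ a : Fin n, ∑ h : Fin m → Fin n,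
          (if a = i then A (Fin.cons a h) * ∏ j, x (h j) else 0)
        = ∑ a : Fin n, if a = i then Dvec A x a else 0 :=
          Finset.sum_congr rfl fun a _ => by split <;> simp [Dvec]
      _ = Dvec A x i := by simp
  rw [h1]
  calc ∑ j : Fin (m + 1), T j = ∑ _j : Fin (m + 1), T 0 :=
        Finset.sum_congr rfl fun j _ => hTj j
    _ = (m + 1 : ℕ) • T 0 := by
        rw [Finset.sum_const, Finset.card_univ, Fintype.card_fin]
    _ = ((m : ℝ) + 1) * Dvec A x i := by
        rw [hT0, nsmul_eq_mul]; push_cast; ring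

lemma sum_pow_pos (heven : Even (m + 1)) (x : Fin n → ℝ) (hx : x ≠ 0) :
    0 < ∑ i, x i ^ (m + 1) := by
  obtain ⟨i0, hi0⟩ := Function.ne_iff.1 hx
  refine Finset.sum_pos' (fun i _ => heven.pow_nonneg _) ⟨i0, Finset.mem_univ _, ?_⟩
  have h : 0 < |x i0| ^ (m + 1) := pow_pos (abs_pos.2 hi0) _
  rwa [heven.pow_abs] at h

lemma scale_lemma (heven : Even (m + 1)) (A : (Fin (m + 1) → Fin n) → ℝ)
    (x : Fin n → ℝ) (hx : x ≠ 0) :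
    ∃ z : Fin n → ℝ, (∑ i, z i ^ (m + 1)) = 1 ∧
      tmul A z = tmul A x / (∑ i, x i ^ (m + 1)) := by
  have hc : 0 < ∑ i, x i ^ (m + 1) := sum_pow_pos heven x hx
  set c := ∑ i, x i ^ (m + 1) with hcdef
  set t := c ^ (-(((m : ℝ) + 1)⁻¹)) with ht
  have htc : t ^ (m + 1) = c⁻¹ := by
    rw [ht, ← Real.rpow_natCast (c ^ (-(((m : ℝ) + 1)⁻¹))) (m + 1), ← Real.rpow_mul hc.le]
    push_cast
    rw [neg_mul, inv_mul_cancel₀ (by positivity), Real.rpow_neg_one]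
  refine ⟨t • x, ?_, ?_⟩
  · have h : ∑ i, (t • x) i ^ (m + 1) = t ^ (m + 1) * c := by
      simp only [Pi.smul_apply, smul_eq_mul, mul_pow, hcdef, ← Finset.mul_sum]
    rw [h, htc, inv_mul_cancel₀ hc.ne']
  · rw [tmul_smul, htc, inv_mul_eq_div]

end Lemma21Aux

/-- Lemma 2.1 (maximum part): for an even-order symmetric tensor, `𝒜x^m`
attains a maximum `μ` on the unit `m`-sphere `{x : ‖x‖_m = 1}`; this value is the
maximum H-eigenvalue, and `λ_max = max_{x ≠ 0} 𝒜x^m / ‖x‖_m^m`. -/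
theorem lemma21_max (m n : ℕ) (hn : 0 < n) (heven : Even (m + 1))
    (A : (Fin (m + 1) → Fin n) → ℝ) (hsym : IsSymT A) :
    ∃ μ : ℝ,
      (∃ x : Fin n → ℝ, (∑ i, x i ^ (m + 1)) = 1 ∧ tmul A x = μ) ∧
      (∀ x : Fin n → ℝ, (∑ i, x i ^ (m + 1)) = 1 → tmul A x ≤ μ) ∧
      IsHEig A μ ∧
      (∀ lam : ℝ, IsHEig A lam → lam ≤ μ) ∧
      (∀ x : Fin n → ℝ, x ≠ 0 → tmul A x / ∑ i, |x i| ^ (m + 1) ≤ μ) := by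
  classical
  have hcont : Continuous (tmul A) := by
    unfold tmul
    exact continuous_finset_sum _ fun g _ =>
      continuous_const.mul (continuous_finset_prod _ fun j _ => continuous_apply _)
  have hφcont : Continuous fun x : Fin n → ℝ => ∑ i, x i ^ (m + 1) :=
    continuous_finset_sum _ fun i _ => (continuous_apply i).pow _
  set S : Set (Fin n → ℝ) := {x | (∑ i, x i ^ (m + 1)) = 1} with hSdef
  have hclosed : IsClosed S := isClosed_eq hφcont continuous_const
  have hsub : S ⊆ Metric.closedBall 0 1 := by
    intro x hx
    rw [Metric.mem_closedBall, dist_zero_right, pi_norm_le_iff_of_nonneg zero_le_one]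
    intro i
    rw [Real.norm_eq_abs]
    have h1 : |x i| ^ (m + 1) ≤ 1 := by
      have h2 := Finset.single_le_sum (f := fun k => x k ^ (m + 1))
        (fun k _ => heven.pow_nonneg _) (Finset.mem_univ i)
      rw [hx] at h2
      rwa [heven.pow_abs]
    exact (pow_le_one_iff_of_nonneg (abs_nonneg _) (Nat.succ_ne_zero m)).1 h1
  have hcompact : IsCompact S :=
    (isCompact_closedBall _ _).of_isClosed_subset hclosed hsub
  have hx0S : (fun i => if i = (⟨0, hn⟩ : Fin n) then (1 : ℝ) else 0) ∈ S := by
    show (∑ i, (if i = (⟨0, hn⟩ : Fin n) then (1 : ℝ) else 0) ^ (m + 1)) = 1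
    simp [apply_ite (· ^ (m + 1)), one_pow, zero_pow (Nat.succ_ne_zero m)]
  obtain ⟨y, hyS, hymax⟩ := hcompact.exists_isMaxOn ⟨_, hx0S⟩ hcont.continuousOn
  have hy1 : (∑ i, y i ^ (m + 1)) = 1 := hyS
  have hy0 : y ≠ 0 := by
    rintro rfl
    simp [zero_pow (Nat.succ_ne_zero m)] at hy1
  have hmax' : ∀ x : Fin n → ℝ, (∑ i, x i ^ (m + 1)) = 1 → tmul A x ≤ tmul A y :=
    fun x hx => hymax hx
  -- Lagrange multipliers
  have hsetEq : {x : Fin n → ℝ | (∑ i, x i ^ (m + 1)) = ∑ i, y i ^ (m + 1)} = S := by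
    rw [hy1]
  have hextr : IsLocalExtrOn (tmul A)
      {x : Fin n → ℝ | (∑ i, x i ^ (m + 1)) = ∑ i, y i ^ (m + 1)} y := by
    rw [hsetEq]
    exact Or.inr (hymax.filter_mono inf_le_right)
  obtain ⟨a, b, hab, heqL⟩ := hextr.exists_multipliers_of_hasStrictFDerivAt_1d
    (hasStrictFDerivAt_phi y) (hasStrictFDerivAt_tmul A y)
  have hm1 : ((m : ℝ) + 1) ≠ 0 := by positivity
  have hb : b ≠ 0 := by
    rintro rfl
    have ha : a ≠ 0 := by
      intro ha0
      exact hab (by simp [ha0])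
    have h := congrArg (fun L : (Fin n → ℝ) →L[ℝ] ℝ => L y) heqL
    simp only [ContinuousLinearMap.add_apply, ContinuousLinearMap.smul_apply,
      ContinuousLinearMap.zero_apply, smul_eq_mul, zero_mul, add_zero] at h
    rw [pder_apply_self, hy1, mul_one] at h
    exact ha (by
      rcases mul_eq_zero.1 h with h' | h'
      · exact h'
      · exact absurd h' hm1)
  set lam := -(a / b) with hlam
  have heig : ∀ i, Dvec A y i = lam * y i ^ m := by
    intro i
    have h := congrArg (fun L : (Fin n → ℝ) →L[ℝ] ℝ => L (Pi.single i 1)) heqL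
    simp only [ContinuousLinearMap.add_apply, ContinuousLinearMap.smul_apply,
      ContinuousLinearMap.zero_apply, smul_eq_mul] at h
    rw [pder_apply_single, fder_apply_single A hsym] at h
    have h3 : ((m : ℝ) + 1) * (a * y i ^ m + b * Dvec A y i) = 0 := by
      linear_combination h
    have h4 : a * y i ^ m + b * Dvec A y i = 0 := by
      rcases mul_eq_zero.1 h3 with h' | h'
      · exact absurd h' hm1
      · exact h'
    rw [hlam]
    field_simp
    linear_combination h4
  have hDsum : tmul A y = lam := by
    rw [← contract A y]
    calc ∑ i, y i * Dvec A y i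
        = ∑ i, lam * y i ^ (m + 1) := by
          refine Finset.sum_congr rfl fun i _ => ?_
          rw [heig i, pow_succ]; ring
      _ = lam := by rw [← Finset.mul_sum, hy1, mul_one]
  refine ⟨tmul A y, ⟨y, hy1, rfl⟩, hmax', ?_, ?_, ?_⟩
  · exact ⟨y, hy0, fun i => by
      show Dvec A y i = tmul A y * y i ^ m
      rw [hDsum, heig i]⟩
  · intro lam' hl
    obtain ⟨x, hxne, heq'⟩ := hl
    have hc : 0 < ∑ i, x i ^ (m + 1) := sum_pow_pos heven x hxne
    have hcontr : tmul A x = lam' * ∑ i, x i ^ (m + 1) := by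
      rw [← contract A x, Finset.mul_sum]
      refine Finset.sum_congr rfl fun i _ => ?_
      show x i * Dvec A x i = lam' * x i ^ (m + 1)
      rw [show Dvec A x i = lam' * x i ^ m from heq' i, pow_succ]; ring
    obtain ⟨z, hz1, hz2⟩ := scale_lemma heven A x hxne
    have hle := hmax' z hz1
    rw [hz2, hcontr, mul_div_assoc, div_self hc.ne', mul_one] at hle
    exact hle
  · intro x hxne
    have habs : (∑ i, |x i| ^ (m + 1)) = ∑ i, x i ^ (m + 1) :=
      Finset.sum_congr rfl fun i _ => heven.pow_abs _
    obtain ⟨z, hz1, hz2⟩ := scale_lemma heven A x hxne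
    rw [habs, ← hz2]
    exact hmax' z hz1


end
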